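/- Let w be the unique vector with positive entries lying in the row span of A satisfying A(1/w) = b. Then P_{n,w} maximizes differential entropy among all absolutely continuous probability measures on ℝ^n_{≥0} whose mean vector exists and lies in K_n: for every such measure Q with density f such that f·log f is integrable, one has −∫ f(x) log f(x) dx ≤ −∫ p(x) log p(x) dx, where p(x) = (∏_j w_j)·exp(−∑_j w_j x_j)·1_{x≥0} is the density of P_{n,w}. -/

import Mathlib

open MeasureTheory

open Real Set

lemma aux_intOn_exp {w : ℝ} (hw : 0 < w) :
    IntegrableOn (fun t : ℝ => w * Real.exp (-(w*t))) (Set.Ici 0) := by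
  rw [integrableOn_Ici_iff_integrableOn_Ioi]
  simpa [IntegrableOn] using (exp_neg_integrableOn_Ioi 0 hw).const_mul w

lemma aux_int_exp {w : ℝ} (hw : 0 < w) :
    ∫ t in Set.Ici (0:ℝ), w * Real.exp (-(w*t)) = 1 := by
  rw [integral_Ici_eq_integral_Ioi, MeasureTheory.integral_const_mul]
  have h := integral_rpow_mul_exp_neg_mul_Ioi (by norm_num : (0:ℝ) < 1) hw
  simp only [sub_self, Real.rpow_zero, one_mul, Real.rpow_one, Real.Gamma_one, mul_one] at h
  rw [h]
  field_simp

lemma aux_intOn_texp {w : ℝ} (hw : 0 < w) :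
    IntegrableOn (fun t : ℝ => t * (w * Real.exp (-(w*t)))) (Set.Ici 0) := by
  rw [integrableOn_Ici_iff_integrableOn_Ioi]
  have hcont : ContinuousOn (fun t : ℝ => t * (w * Real.exp (-(w*t)))) (Set.Ici 0) := by
    fun_prop
  refine integrable_of_isBigO_exp_neg (half_pos hw) hcont ?_
  have h1 : Filter.Tendsto (fun t : ℝ => t * (w * Real.exp (-(w/2) * t))) Filter.atTop (nhds 0) := by
    have := tendsto_rpow_mul_exp_neg_mul_atTop_nhds_zero 1 (w/2) (half_pos hw)
    have h2 := this.const_mul w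
    rw [mul_zero] at h2
    refine h2.congr' ?_
    filter_upwards [Filter.eventually_ge_atTop (0:ℝ)] with t ht
    rw [Real.rpow_one]; ring
  have hO : (fun t : ℝ => t * (w * Real.exp (-(w/2) * t))) =O[Filter.atTop] (fun _ : ℝ => (1:ℝ)) :=
    h1.isBigO_one ℝ
  have := hO.mul (Asymptotics.isBigO_refl (fun t : ℝ => Real.exp (-(w/2) * t)) Filter.atTop)
  refine (this.congr ?_ ?_)
  · intro t
    rw [show (-(w*t)) = (-(w/2)*t) + (-(w/2)*t) by ring, Real.exp_add]
    ring
  · intro t; rw [one_mul]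

lemma aux_int_texp {w : ℝ} (hw : 0 < w) :
    ∫ t in Set.Ici (0:ℝ), t * (w * Real.exp (-(w*t))) = w⁻¹ := by
  rw [integral_Ici_eq_integral_Ioi]
  have h := integral_rpow_mul_exp_neg_mul_Ioi (by norm_num : (0:ℝ) < 2) hw
  rw [Real.Gamma_two] at h
  have heq : ∫ t in Set.Ioi (0:ℝ), t * (w * Real.exp (-(w*t)))
      = w * ∫ t in Set.Ioi (0:ℝ), t ^ ((2:ℝ) - 1) * Real.exp (-(w*t)) := by
    rw [← MeasureTheory.integral_const_mul]
    refine setIntegral_congr_fun measurableSet_Ioi (fun t ht => ?_)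
    rw [show (2:ℝ)-1 = 1 by norm_num, Real.rpow_one]; ring
  rw [heq, h, one_div]
  rw [show (2:ℝ) = ((2:ℕ):ℝ) by norm_num, Real.rpow_natCast]
  field_simp

section
variable {n : ℕ} (w : Fin n → ℝ)

/-- the 1-D factor densities -/
noncomputable def auxg (j : Fin n) : ℝ → ℝ :=
  (Set.Ici (0:ℝ)).indicator (fun t => w j * Real.exp (-(w j * t)))

lemma auxg_int (hwpos : ∀ j, 0 < w j) (j : Fin n) : Integrable (auxg w j) :=
  (aux_intOn_exp (hwpos j)).integrable_indicator measurableSet_Ici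

lemma auxg_integral (hwpos : ∀ j, 0 < w j) (j : Fin n) : ∫ t, auxg w j t = 1 := by
  rw [auxg, integral_indicator measurableSet_Ici]
  exact aux_int_exp (hwpos j)

lemma auxg_prod_eq (x : Fin n → ℝ) :
    Set.indicator {x : Fin n → ℝ | ∀ j, 0 ≤ x j}
      (fun x => (∏ j, w j) * Real.exp (-∑ j, w j * x j)) x = ∏ j, auxg w j (x j) := by
  by_cases h : ∀ j, 0 ≤ x j
  · rw [Set.indicator_of_mem (Set.mem_setOf.mpr h)]
    have : ∀ j, auxg w j (x j) = w j * Real.exp (-(w j * x j)) := fun j =>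
      Set.indicator_of_mem (h j) _
    simp only [this]
    rw [Finset.prod_mul_distrib, ← Real.exp_sum]
    congr 1
    rw [← Finset.sum_neg_distrib]
  · rw [Set.indicator_of_notMem (fun hc => h (Set.mem_setOf.mp hc))]
    push_neg at h
    obtain ⟨j, hj⟩ := h
    refine (Finset.prod_eq_zero (Finset.mem_univ j) ?_).symm
    exact Set.indicator_of_notMem (by simpa using hj) _

lemma auxp_integrable (hwpos : ∀ j, 0 < w j) :
    Integrable (fun x : Fin n → ℝ => ∏ j, auxg w j (x j)) :=
  Integrable.fintype_prod (fun j => auxg_int w hwpos j)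

lemma auxp_integral (hwpos : ∀ j, 0 < w j) :
    ∫ x : Fin n → ℝ, ∏ j, auxg w j (x j) = 1 := by
  rw [MeasureTheory.integral_fintype_prod_volume_eq_prod]
  simp [auxg_integral w hwpos]

/-- the factor densities with one coordinate weighted -/
noncomputable def auxh (k : Fin n) : Fin n → ℝ → ℝ :=
  Function.update (auxg w) k (fun t => t * auxg w k t)

lemma auxh_k_eq (k : Fin n) :
    auxh w k k = (Set.Ici (0:ℝ)).indicator (fun t => t * (w k * Real.exp (-(w k * t)))) := by
  funext t
  rw [auxh, Function.update_self]
  by_cases ht : t ∈ Set.Ici (0:ℝ)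
  · rw [Set.indicator_of_mem ht, auxg, Set.indicator_of_mem ht]
  · rw [Set.indicator_of_notMem ht, auxg, Set.indicator_of_notMem ht, mul_zero]

lemma auxh_int (hwpos : ∀ j, 0 < w j) (k j : Fin n) : Integrable (auxh w k j) := by
  by_cases h : j = k
  · subst h
    rw [auxh_k_eq]
    exact (aux_intOn_texp (hwpos j)).integrable_indicator measurableSet_Ici
  · rw [auxh, Function.update_of_ne h]
    exact auxg_int w hwpos j

lemma auxh_prod_eq (k : Fin n) (x : Fin n → ℝ) :
    x k * ∏ j, auxg w j (x j) = ∏ j, auxh w k j (x j) := by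
  rw [← Finset.mul_prod_erase Finset.univ _ (Finset.mem_univ k),
      ← Finset.mul_prod_erase Finset.univ (fun j => auxh w k j (x j)) (Finset.mem_univ k),
      ← mul_assoc]
  congr 1
  · rw [auxh, Function.update_self]
  · exact (Finset.prod_congr rfl (fun j hj => by
      rw [auxh, Function.update_of_ne (Finset.ne_of_mem_erase hj)])).symm

lemma auxh_integrable (hwpos : ∀ j, 0 < w j) (k : Fin n) :
    Integrable (fun x : Fin n → ℝ => x k * ∏ j, auxg w j (x j)) := by
  simp only [auxh_prod_eq w k]
  exact Integrable.fintype_prod (fun j => auxh_int w hwpos k j)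

lemma auxh_integral (hwpos : ∀ j, 0 < w j) (k : Fin n) :
    ∫ x : Fin n → ℝ, x k * ∏ j, auxg w j (x j) = (w k)⁻¹ := by
  simp only [auxh_prod_eq w k]
  rw [MeasureTheory.integral_fintype_prod_volume_eq_prod]
  rw [Finset.prod_eq_single k]
  · rw [auxh_k_eq, integral_indicator measurableSet_Ici]
    exact aux_int_texp (hwpos k)
  · intro j _ hj
    rw [auxh, Function.update_of_ne hj]
    exact auxg_integral w hwpos j
  · simp

end

lemma aux_sum_dot {m n : ℕ} (A : Matrix (Fin m) (Fin n) ℝ) (u : Fin m → ℝ)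
    (b : Fin m → ℝ) (ν : Fin n → ℝ) (hν : A.mulVec ν = b) :
    ∑ j, (A.transpose.mulVec u) j * ν j = ∑ i, u i * b i := by
  simp only [Matrix.mulVec, dotProduct, Matrix.transpose_apply, ← hν]
  simp only [Finset.sum_mul, Finset.mul_sum]
  rw [Finset.sum_comm]
  apply Finset.sum_congr rfl (fun i _ => Finset.sum_congr rfl (fun j _ => by ring))

/-- **Maximum entropy property of `P_{n,w}`.**
Let `w` be the unique positive vector in the row span of `A` with `A (1/w) = b`, and let
`p` be the density of `P_{n,w}`, i.e. `p x = (∏ j, w j) exp(-∑ j, w j x j)` on the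
nonnegative orthant, `0` elsewhere.  Then for every absolutely continuous probability
measure on `ℝ^n_{≥0}` with density `f` such that `f log f` is integrable and whose mean
vector lies in `K_n = {x ≥ 0 : A x = b}`, the differential entropy of `f` is at most the
differential entropy of `p`:  `-∫ f log f ≤ -∫ p log p`. -/
theorem maximum_entropy_of_barycenter
    (m n : ℕ) (hm : 0 < m) (hmn : m < n)
    (A : Matrix (Fin m) (Fin n) ℝ) (hApos : ∀ i j, 0 < A i j)
    (hArank : A.rank = m)
    (b : Fin m → ℝ) (hbpos : ∀ i, 0 < b i)
    (hint : ∃ x : Fin n → ℝ, (∀ j, 0 < x j) ∧ A.mulVec x = b)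
    (w : Fin n → ℝ) (hwpos : ∀ j, 0 < w j)
    (hwspan : ∃ u : Fin m → ℝ, w = A.transpose.mulVec u)
    (hwb : A.mulVec (fun j => (w j)⁻¹) = b)
    (p : (Fin n → ℝ) → ℝ)
    (hp : p = Set.indicator {x : Fin n → ℝ | ∀ j, 0 ≤ x j}
      (fun x => (∏ j, w j) * Real.exp (-∑ j, w j * x j)))
    -- `f` is the density of an absolutely continuous probability measure on `ℝ^n_{≥0}`:
    (f : (Fin n → ℝ) → ℝ)
    (hf0 : ∀ x, 0 ≤ f x)
    (hfsupp : ∀ x : Fin n → ℝ, ¬ (∀ j, 0 ≤ x j) → f x = 0)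
    (hfint : Integrable f)
    (hfprob : ∫ x : Fin n → ℝ, f x = 1)
    -- the mean vector of `f` exists and lies in `K_n`:
    (hmeanint : ∀ j : Fin n, Integrable (fun x : Fin n → ℝ => x j * f x))
    (hmeanK : (∀ j : Fin n, 0 ≤ ∫ x : Fin n → ℝ, x j * f x) ∧
      A.mulVec (fun j => ∫ x : Fin n → ℝ, x j * f x) = b)
    -- `f log f` is integrable:
    (hflog : Integrable (fun x : Fin n → ℝ => f x * Real.log (f x))) :
    -∫ x : Fin n → ℝ, f x * Real.log (f x) ≤ -∫ x : Fin n → ℝ, p x * Real.log (p x) := by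
  obtain ⟨u, hu⟩ := hwspan
  set C : ℝ := ∏ j, w j with hCdef
  have hC : 0 < C := Finset.prod_pos (fun j _ => hwpos j)
  set Su : ℝ := ∑ i, u i * b i with hSu
  -- product form of p
  have hpfun : p = fun x : Fin n → ℝ => ∏ j, auxg w j (x j) :=
    funext fun x => by rw [hp]; exact auxg_prod_eq w x
  have hpint : Integrable p := by rw [hpfun]; exact auxp_integrable w hwpos
  have hpone : ∫ x : Fin n → ℝ, p x = 1 := by rw [hpfun]; exact auxp_integral w hwpos
  have hpk : ∀ k, ∫ x : Fin n → ℝ, x k * p x = (w k)⁻¹ := fun k => by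
    rw [hpfun]; exact auxh_integral w hwpos k
  have hpkint : ∀ k, Integrable (fun x : Fin n → ℝ => x k * p x) := fun k => by
    rw [hpfun]; exact auxh_integrable w hwpos k
  have hp0 : ∀ x, 0 ≤ p x := fun x => by
    rw [hpfun]; exact Finset.prod_nonneg fun j _ => Set.indicator_nonneg
      (fun t _ => mul_nonneg (hwpos j).le (Real.exp_nonneg _)) _
  -- f-side linear functional
  have hfLrw : (fun x : Fin n → ℝ => f x * ∑ j, w j * x j)
      = fun x => ∑ j, w j * (x j * f x) := funext fun x => by
    rw [Finset.mul_sum]; exact Finset.sum_congr rfl fun j _ => by ring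
  have hfL : Integrable (fun x : Fin n → ℝ => f x * ∑ j, w j * x j) := by
    rw [hfLrw]; exact integrable_finset_sum _ fun j _ => (hmeanint j).const_mul _
  have hfLval : ∫ x : Fin n → ℝ, f x * ∑ j, w j * x j = Su := by
    rw [hfLrw, integral_finset_sum _ (fun j _ => (hmeanint j).const_mul _)]
    simp_rw [MeasureTheory.integral_const_mul]
    calc ∑ j, w j * ∫ x : Fin n → ℝ, x j * f x
        = ∑ j, (A.transpose.mulVec u) j * (fun j => ∫ x : Fin n → ℝ, x j * f x) j := by
          rw [← hu]
      _ = Su := aux_sum_dot A u b _ hmeanK.2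
  -- p-side linear functional
  have hpLrw : (fun x : Fin n → ℝ => p x * ∑ j, w j * x j)
      = fun x => ∑ j, w j * (x j * p x) := funext fun x => by
    rw [Finset.mul_sum]; exact Finset.sum_congr rfl fun j _ => by ring
  have hpL : Integrable (fun x : Fin n → ℝ => p x * ∑ j, w j * x j) := by
    rw [hpLrw]; exact integrable_finset_sum _ fun j _ => (hpkint j).const_mul _
  have hpLval : ∫ x : Fin n → ℝ, p x * ∑ j, w j * x j = Su := by
    rw [hpLrw, integral_finset_sum _ (fun j _ => (hpkint j).const_mul _)]
    simp_rw [MeasureTheory.integral_const_mul, hpk]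
    calc ∑ j, w j * (w j)⁻¹
        = ∑ j, (A.transpose.mulVec u) j * (fun j => (w j)⁻¹) j := by rw [← hu]
      _ = Su := aux_sum_dot A u b _ hwb
  -- p log p pointwise
  have hplogp : (fun x : Fin n → ℝ => p x * Real.log (p x))
      = fun x => Real.log C * p x - p x * ∑ j, w j * x j := by
    funext x
    by_cases h : ∀ j, 0 ≤ x j
    · have hpx : p x = C * Real.exp (-∑ j, w j * x j) := by
        rw [hp]; exact Set.indicator_of_mem (Set.mem_setOf.mpr h) _
      rw [hpx, Real.log_mul hC.ne' (Real.exp_ne_zero _), Real.log_exp]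
      ring
    · have hpx : p x = 0 := by
        rw [hp]; exact Set.indicator_of_notMem (fun hc => h (Set.mem_setOf.mp hc)) _
      rw [hpx]; simp
  have hplogint : ∫ x : Fin n → ℝ, p x * Real.log (p x) = Real.log C - Su := by
    rw [hplogp, integral_sub (hpint.const_mul _) hpL,
      MeasureTheory.integral_const_mul, hpone, hpLval, mul_one]
  -- Gibbs pointwise inequality
  have hgibbs : ∀ x : Fin n → ℝ,
      f x - p x ≤ f x * Real.log (f x) - f x * (Real.log C - ∑ j, w j * x j) := by
    intro x
    by_cases h : ∀ j, 0 ≤ x j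
    · have hpx : p x = C * Real.exp (-∑ j, w j * x j) := by
        rw [hp]; exact Set.indicator_of_mem (Set.mem_setOf.mpr h) _
      have hppos : 0 < p x := by rw [hpx]; positivity
      have hlogp : Real.log (p x) = Real.log C - ∑ j, w j * x j := by
        rw [hpx, Real.log_mul hC.ne' (Real.exp_ne_zero _), Real.log_exp]; ring
      rcases eq_or_lt_of_le (hf0 x) with hf | hf
      · rw [← hf]; simp [hppos.le]
      · have hlog := Real.log_le_sub_one_of_pos (div_pos hppos hf)
        rw [Real.log_div hppos.ne' hf.ne'] at hlog
        have hmul := mul_le_mul_of_nonneg_left hlog (hf0 x)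
        rw [mul_sub] at hmul
        have hdiv : f x * (p x / f x - 1) = p x - f x := by field_simp
        rw [hdiv] at hmul
        rw [← hlogp]
        linarith
    · have hpx : p x = 0 := by
        rw [hp]; exact Set.indicator_of_notMem (fun hc => h (Set.mem_setOf.mp hc)) _
      rw [hfsupp x h, hpx]; simp
  -- integrability of the RHS of Gibbs
  have hDrw : (fun x : Fin n → ℝ => f x * Real.log (f x)
        - f x * (Real.log C - ∑ j, w j * x j))
      = fun x => f x * Real.log (f x)
        - (Real.log C * f x - f x * ∑ j, w j * x j) := funext fun x => by ring
  have hDint : Integrable (fun x : Fin n → ℝ => f x * Real.log (f x)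
      - f x * (Real.log C - ∑ j, w j * x j)) := by
    rw [hDrw]; exact hflog.sub ((hfint.const_mul _).sub hfL)
  have hmono := MeasureTheory.integral_mono (hfint.sub hpint) hDint hgibbs
  simp only [Pi.sub_apply] at hmono
  have h2 : Integrable (fun x : Fin n → ℝ => Real.log C * f x - f x * ∑ j, w j * x j) :=
    (hfint.const_mul _).sub hfL
  have h3 : Integrable (fun x : Fin n → ℝ => Real.log C * f x) := hfint.const_mul _
  rw [integral_sub hfint hpint, hfprob, hpone, sub_self, hDrw,
    integral_sub hflog h2, integral_sub h3 hfL,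
    MeasureTheory.integral_const_mul, hfprob, hfLval, mul_one] at hmono
  rw [hplogint]
  linarith
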